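/- Restriction formula for Efron-Stein components: for a d-partite complex X, a function f, and disjoint I, B ⊆ [d], the component f^{=I∪B} evaluated at a point with I-coordinates y_I and B-coordinates x_B satisfies f^{=I∪B}(y_I, x_B) = ∑_{J ⊆ I} (−1)^{|I|−|J|} (f|_{y_J})^{=B}(x_B), where f|_{y_J} denotes the restriction of f to the link of y_J. -/

import Mathlib

open Finset BigOperators

/-- Conditional expectation operator `E_T` on a `d`-partite space:
`E_T f (x) = E[f(y) | y_T = x_T]` under the (finitely supported) measure `μ`. -/
noncomputable def projE {d : ℕ} {Ω : Type} [Fintype Ω] [DecidableEq Ω]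
    (μ : (Fin d → Ω) → ℝ) (T : Finset (Fin d))
    (f : (Fin d → Ω) → ℝ) (x : Fin d → Ω) : ℝ :=
  (∑ y : Fin d → Ω, if ∀ i ∈ T, y i = x i then μ y * f y else 0) /
  (∑ y : Fin d → Ω, if ∀ i ∈ T, y i = x i then μ y else 0)

/-- Efron–Stein component `f^{=S} = ∑_{T ⊆ S} (-1)^{|S|-|T|} E_T f`. -/
noncomputable def esComp {d : ℕ} {Ω : Type} [Fintype Ω] [DecidableEq Ω]
    (μ : (Fin d → Ω) → ℝ) (S : Finset (Fin d))
    (f : (Fin d → Ω) → ℝ) : (Fin d → Ω) → ℝ :=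
  fun x => ∑ T ∈ S.powerset, (-1 : ℝ) ^ (S.card - T.card) * projE μ T f x

/-- `L^q` norm with respect to the probability mass function `μ`. -/
noncomputable def pnorm {α : Type} [Fintype α] (μ : α → ℝ) (q : ℝ) (f : α → ℝ) : ℝ :=
  (∑ x, μ x * |f x| ^ q) ^ (1 / q)

/-- Conditional (link) measure obtained from `μ` by conditioning the coordinates
in `R` to agree with `z`. -/
noncomputable def condMeasure {d : ℕ} {Ω : Type} [Fintype Ω] [DecidableEq Ω]
    (μ : (Fin d → Ω) → ℝ) (R : Finset (Fin d)) (z : Fin d → Ω) :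
    (Fin d → Ω) → ℝ :=
  fun y => (if ∀ i ∈ R, y i = z i then μ y else 0) /
    (∑ y' : Fin d → Ω, if ∀ i ∈ R, y' i = z i then μ y' else 0)

/-- restriction formula for Efron–Stein components. For disjoint
`I, B ⊆ [d]`, the component `f^{=I∪B}` evaluated at `x` equals
`∑_{J ⊆ I} (−1)^{|I|−|J|} (f|_{x_J})^{=B}(x)`, where `f|_{x_J}` is the
restriction of `f` to the link of `x_J` (the measure conditioned on the
`J`-coordinates of `x`). -/
lemma projE_cond {d : ℕ} {Ω : Type} [Fintype Ω] [DecidableEq Ω]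
    (μ : (Fin d → Ω) → ℝ) (hμ0 : ∀ y, 0 ≤ μ y)
    (J T : Finset (Fin d)) (f : (Fin d → Ω) → ℝ) (x : Fin d → Ω) :
    projE (condMeasure μ J x) T f x = projE μ (J ∪ T) f x := by
  set Z : ℝ := ∑ y' : Fin d → Ω, if ∀ i ∈ J, y' i = x i then μ y' else 0 with hZ
  have hsplit : ∀ y : Fin d → Ω, (∀ i ∈ J ∪ T, y i = x i) ↔
      ((∀ i ∈ J, y i = x i) ∧ (∀ i ∈ T, y i = x i)) := fun y => Finset.forall_mem_union
  have hnum : ∀ y : Fin d → Ω,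
      (if ∀ i ∈ T, y i = x i then condMeasure μ J x y * f y else 0)
        = (if ∀ i ∈ J ∪ T, y i = x i then μ y * f y else 0) / Z := by
    intro y
    by_cases h1 : ∀ i ∈ J, y i = x i <;> by_cases h2 : ∀ i ∈ T, y i = x i
    · rw [if_pos h2, if_pos ((hsplit y).mpr ⟨h1, h2⟩), condMeasure, if_pos h1, ← hZ,
        div_mul_eq_mul_div]
    · rw [if_neg h2, if_neg (fun h => h2 ((hsplit y).mp h).2), zero_div]
    · rw [if_pos h2, if_neg (fun h => h1 ((hsplit y).mp h).1), condMeasure, if_neg h1, ← hZ]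
      simp
    · rw [if_neg h2, if_neg (fun h => h2 ((hsplit y).mp h).2), zero_div]
  have hden : ∀ y : Fin d → Ω,
      (if ∀ i ∈ T, y i = x i then condMeasure μ J x y else 0)
        = (if ∀ i ∈ J ∪ T, y i = x i then μ y else 0) / Z := by
    intro y
    by_cases h1 : ∀ i ∈ J, y i = x i <;> by_cases h2 : ∀ i ∈ T, y i = x i
    · rw [if_pos h2, if_pos ((hsplit y).mpr ⟨h1, h2⟩), condMeasure, if_pos h1, ← hZ]
    · rw [if_neg h2, if_neg (fun h => h2 ((hsplit y).mp h).2), zero_div]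
    · rw [if_pos h2, if_neg (fun h => h1 ((hsplit y).mp h).1), condMeasure, if_neg h1, ← hZ]
    · rw [if_neg h2, if_neg (fun h => h2 ((hsplit y).mp h).2), zero_div]
  simp only [projE, hnum, hden, ← Finset.sum_div]
  rcases eq_or_ne Z 0 with hZ0 | hZ0
  · have hC : (∑ y : Fin d → Ω, if ∀ i ∈ J ∪ T, y i = x i then μ y else 0) = 0 := by
      apply Finset.sum_eq_zero
      intro y _
      split_ifs with h
      · have hZ0' : (∑ y' : Fin d → Ω, if ∀ i ∈ J, y' i = x i then μ y' else 0) = 0 := hZ0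
        have := (Finset.sum_eq_zero_iff_of_nonneg
          (fun y' (_ : y' ∈ Finset.univ) => by
            split_ifs with hy
            exacts [hμ0 y', le_rfl])).mp hZ0' y (Finset.mem_univ y)
        rwa [if_pos (fun i hi => h i (Finset.mem_union_left _ hi))] at this
      · rfl
    rw [hZ0, hC]
    simp
  · rw [div_div_div_cancel_right₀ hZ0]

theorem es_restriction_formula {d : ℕ} {Ω : Type} [Fintype Ω] [DecidableEq Ω]
    (μ : (Fin d → Ω) → ℝ) (hμ0 : ∀ y, 0 ≤ μ y)
    (f : (Fin d → Ω) → ℝ) (I B : Finset (Fin d)) (hIB : Disjoint I B)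
    (x : Fin d → Ω) :
    esComp μ (I ∪ B) f x
      = ∑ J ∈ I.powerset,
          (-1 : ℝ) ^ (I.card - J.card) * esComp (condMeasure μ J x) B f x := by
  simp only [esComp, projE_cond μ hμ0, Finset.mul_sum, ← Finset.sum_product']
  apply Finset.sum_nbij' (fun S => (S ∩ I, S ∩ B)) (fun p => p.1 ∪ p.2)
  · intro S hS
    simp only [Finset.mem_product, Finset.mem_powerset] at *
    exact ⟨Finset.inter_subset_right, Finset.inter_subset_right⟩
  · intro p hp
    simp only [Finset.mem_product, Finset.mem_powerset] at *
    exact Finset.union_subset_union hp.1 hp.2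
  · intro S hS
    simp only [Finset.mem_powerset] at hS
    rw [← Finset.inter_union_distrib_left, Finset.inter_eq_left.mpr hS]
  · intro p hp
    simp only [Finset.mem_product, Finset.mem_powerset] at hp
    have h1 : (p.1 ∪ p.2) ∩ I = p.1 := by
      ext a
      simp only [Finset.mem_inter, Finset.mem_union]
      constructor
      · rintro ⟨h | h, hI⟩
        · exact h
        · exact absurd hI (Finset.disjoint_right.mp hIB (hp.2 h))
      · exact fun h => ⟨Or.inl h, hp.1 h⟩
    have h2 : (p.1 ∪ p.2) ∩ B = p.2 := by
      ext a
      simp only [Finset.mem_inter, Finset.mem_union]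
      constructor
      · rintro ⟨h | h, hB⟩
        · exact absurd hB (Finset.disjoint_left.mp hIB (hp.1 h))
        · exact h
      · exact fun h => ⟨Or.inr h, hp.2 h⟩
    exact Prod.ext h1 h2
  · intro S hS
    simp only [Finset.mem_powerset] at hS
    have hJ : S ∩ I ⊆ I := Finset.inter_subset_right
    have hT : S ∩ B ⊆ B := Finset.inter_subset_right
    have hU : S ∩ I ∪ S ∩ B = S := by
      rw [← Finset.inter_union_distrib_left, Finset.inter_eq_left.mpr hS]
    have hScard : S.card = (S ∩ I).card + (S ∩ B).card := by
      conv_lhs => rw [← hU]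
      exact Finset.card_union_of_disjoint
        (hIB.mono Finset.inter_subset_right Finset.inter_subset_right)
    have hUcard : (I ∪ B).card = I.card + B.card := Finset.card_union_of_disjoint hIB
    have hsub : (I ∪ B).card - S.card = (I.card - (S ∩ I).card) + (B.card - (S ∩ B).card) := by
      have := Finset.card_le_card hJ
      have := Finset.card_le_card hT
      omega
    rw [hU, hsub, pow_add, mul_assoc]
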